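/- Let 𝒳, 𝒴 be finite alphabets with |𝒳| ≥ 2, W a discrete memoryless channel from 𝒳 to 𝒴, α ∈ (0, 1/2], and ε ∈ (0, 2]. Let n be a positive multiple of |𝒳| with n ≥ |𝒳|, n ≥ 2|𝒴|, and n ≥ max{ L·(N_α/ε²)·log²(V_α·N_α/ε²), 2·N_α/ε }, where L := 375/4 and V_α := (25/4)·θ_α. Then, in the sampling model, Pr[ |Ĉⁿ(W) − C(W)| ≤ ε ] ≥ 1 − α. -/

import Mathlib

open MeasureTheory ProbabilityTheory

/-- A probability distribution on a finite alphabet. -/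
def IsDist {𝒴 : Type*} [Fintype 𝒴] (P : 𝒴 → ℝ) : Prop :=
  (∀ y, 0 ≤ P y) ∧ ∑ y, P y = 1

/-- The Kullback–Leibler divergence, valued in `EReal`: it equals the real sum
`∑ y, P y * log (P y / Q y)` (with the convention `0 · log (0/q) = 0`) when
`P ≪ Q`, and `+∞` if `P y > 0 = Q y` for some `y`. -/
noncomputable def klE {𝒴 : Type*} [Fintype 𝒴] (P Q : 𝒴 → ℝ) : EReal :=
  if ∀ y, Q y = 0 → P y = 0 then ((∑ y, P y * Real.log (P y / Q y) : ℝ) : EReal) else ⊤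

/-- The capacity of a DMC in the Csiszár–Kemperman dual (minimax) form. -/
noncomputable def capE {𝒳 𝒴 : Type*} [Fintype 𝒳] [Fintype 𝒴] (W : 𝒳 → 𝒴 → ℝ) : EReal :=
  ⨅ (Q : 𝒴 → ℝ) (_ : IsDist Q), ⨆ x : 𝒳, klE (W x) Q

/-- Real-valued capacity (the capacity of a DMC is always finite). -/
noncomputable def capR {𝒳 𝒴 : Type*} [Fintype 𝒳] [Fintype 𝒴] (W : 𝒳 → 𝒴 → ℝ) : ℝ :=
  (capE W).toReal

/-- Empirical channel from `m` output samples per input symbol. -/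
noncomputable def empCh {𝒳 𝒴 : Type*} [Fintype 𝒴] [DecidableEq 𝒴] {m : ℕ}
    (Ys : 𝒳 → Fin m → 𝒴) : 𝒳 → 𝒴 → ℝ :=
  fun x y => ((Finset.univ.filter fun i => Ys x i = y).card : ℝ) / m

/-- `N_α := 4|𝒳||𝒴| log(|𝒳|/α)`. -/
noncomputable def Nal (cX cY : ℕ) (α : ℝ) : ℝ := 4 * cX * cY * Real.log (cX / α)

/-- `θ_α := (|𝒴|·e² / (|𝒳|·log(|𝒳|/α)))^{1/5}`. -/
noncomputable def thetaAl (cX cY : ℕ) (α : ℝ) : ℝ :=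
  ((cY : ℝ) * Real.exp 2 / (cX * Real.log (cX / α))) ^ ((1 : ℝ) / 5)

open Real




lemma aux_mul_log_div_le {p q : ℝ} (hp : 0 ≤ p) (hq : 0 ≤ q) (h : q = 0 → p = 0) :
    p * Real.log (q / p) ≤ q - p := by
  rcases eq_or_lt_of_le hp with hp0 | hp0
  · simp [← hp0, hq]
  rcases eq_or_lt_of_le hq with hq0 | hq0
  · exact absurd (h hq0.symm) (ne_of_gt hp0)
  calc p * Real.log (q / p) ≤ p * (q / p - 1) := by
        have := Real.log_le_sub_one_of_pos (div_pos hq0 hp0)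
        nlinarith
    _ = q - p := by field_simp

lemma gibbs {𝒴 : Type*} [Fintype 𝒴] {P Q : 𝒴 → ℝ} (hP : IsDist P) (hQ : IsDist Q)
    (hac : ∀ y, Q y = 0 → P y = 0) : 0 ≤ ∑ y, P y * Real.log (P y / Q y) := by
  have key : ∑ y, P y * Real.log (Q y / P y) ≤ 0 := by
    have h1 : ∑ y, P y * Real.log (Q y / P y) ≤ ∑ y, (Q y - P y) :=
      Finset.sum_le_sum fun y _ => aux_mul_log_div_le (hP.1 y) (hQ.1 y) (hac y)
    have : ∑ y, (Q y - P y) = 0 := by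
      rw [Finset.sum_sub_distrib, hP.2, hQ.2]; ring
    linarith
  have heq : ∀ y, P y * Real.log (P y / Q y) = -(P y * Real.log (Q y / P y)) := by
    intro y
    rw [show P y / Q y = (Q y / P y)⁻¹ by rw [inv_div], Real.log_inv]
    ring
  rw [Finset.sum_congr rfl fun y _ => heq y, Finset.sum_neg_distrib]
  linarith

/-- Monotonicity of `-s log s` on `[0, e⁻¹]`. -/
lemma aux_negmul_mono {s τ : ℝ} (hs : 0 ≤ s) (hst : s ≤ τ) (hτ : τ ≤ Real.exp (-1)) :
    -(s * Real.log s) ≤ -(τ * Real.log τ) := by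
  rcases eq_or_lt_of_le hs with hs0 | hs0
  · rw [← hs0]
    simp only [zero_mul, neg_zero, mul_zero]
    have hτ0 : 0 ≤ τ := le_trans hs hst
    have : Real.log τ ≤ 0 := Real.log_nonpos hτ0 (le_trans hτ (by
      have := Real.exp_le_exp.2 (show (-1:ℝ) ≤ 0 by norm_num)
      simpa using this))
    nlinarith
  have hτ0 : 0 < τ := lt_of_lt_of_le hs0 hst
  have hlogτ : Real.log τ ≤ -1 := by
    calc Real.log τ ≤ Real.log (Real.exp (-1)) := Real.log_le_log hτ0 hτ
      _ = -1 := Real.log_exp _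
  -- s log s - τ log τ = s log (s/τ) + (s - τ) log τ
  have h1 : s * Real.log (s / τ) ≥ s - τ := by
    have hlog : Real.log (τ / s) ≤ τ / s - 1 := Real.log_le_sub_one_of_pos (div_pos hτ0 hs0)
    have : Real.log (s / τ) = -Real.log (τ / s) := by
      rw [show s / τ = (τ / s)⁻¹ by rw [inv_div], Real.log_inv]
    rw [this]
    have : s * Real.log (τ / s) ≤ τ - s := by
      have := mul_le_mul_of_nonneg_left hlog hs
      calc s * Real.log (τ / s) ≤ s * (τ / s - 1) := this
        _ = τ - s := by field_simp
    nlinarith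
  have h2 : (s - τ) * Real.log τ ≥ τ - s := by
    nlinarith [hlogτ, sub_nonneg.2 hst]
  have hsplit : s * Real.log s - τ * Real.log τ = s * Real.log (s / τ) + (s - τ) * Real.log τ := by
    rw [Real.log_div (ne_of_gt hs0) (ne_of_gt hτ0)]; ring
  nlinarith [h1, h2]

lemma aux_mul_log_perturb_core {v w : ℝ} (hw0 : 0 ≤ w) (hv0 : 0 ≤ v) (hv1 : v ≤ 1)
    (hwv : w ≤ v) :
    |v * Real.log v - w * Real.log w| ≤ (v - w) - (v - w) * Real.log (v - w) := by
  have hd0 : 0 ≤ v - w := sub_nonneg.2 hwv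
  have hd1 : v - w ≤ 1 := by linarith
  have hlogd : Real.log (v - w) ≤ 0 := Real.log_nonpos hd0 hd1
  have hlogv : Real.log v ≤ 0 := Real.log_nonpos hv0 hv1
  -- upper bound : v log v - w log w ≤ v - w
  have hub : v * Real.log v - w * Real.log w ≤ v - w := by
    rcases eq_or_lt_of_le hw0 with hw | hw
    · -- w = 0
      have : v * Real.log v ≤ 0 := mul_nonpos_iff.2 (Or.inl ⟨hv0, hlogv⟩)
      rw [← hw]; simp only [zero_mul, sub_zero, Real.log_zero, mul_zero]
      exact le_trans this hv0
    · have hv : 0 < v := lt_of_lt_of_le hw hwv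
      have h1 : w * Real.log (v / w) ≤ v - w := by
        have := aux_mul_log_div_le hw.le hv0 (fun h => absurd h (ne_of_gt hv))
        linarith
      have hsplit : v * Real.log v - w * Real.log w
          = (v - w) * Real.log v + w * Real.log (v / w) := by
        rw [Real.log_div (ne_of_gt hv) (ne_of_gt hw)]; ring
      have h2 : (v - w) * Real.log v ≤ 0 := mul_nonpos_iff.2 (Or.inl ⟨hd0, hlogv⟩)
      linarith
  -- lower bound : (v-w) log (v-w) ≤ v log v - w log w
  have hlb : (v - w) * Real.log (v - w) ≤ v * Real.log v - w * Real.log w := by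
    rcases eq_or_lt_of_le hd0 with hdz | hdz
    · have hvw : v = w := by linarith
      rw [hvw]; simp
    · have hv : 0 < v := lt_of_lt_of_le hdz (by linarith)
      have hwlog : w * Real.log w ≤ w * Real.log v := by
        rcases eq_or_lt_of_le hw0 with hw | hw
        · rw [← hw]; simp
        · exact mul_le_mul_of_nonneg_left (Real.log_le_log hw (by linarith)) hw0
      have hdlog : (v - w) * Real.log (v - w) ≤ (v - w) * Real.log v :=
        mul_le_mul_of_nonneg_left (Real.log_le_log hdz (by linarith)) hd0
      nlinarith
  have hdd : (v - w) * Real.log (v - w) ≤ 0 := mul_nonpos_iff.2 (Or.inl ⟨hd0, hlogd⟩)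
  rw [abs_le]
  constructor <;> nlinarith

lemma aux_mul_log_perturb {v w : ℝ} (hw0 : 0 ≤ w) (hv0 : 0 ≤ v) (hv1 : v ≤ 1) (hw1 : w ≤ 1) :
    |v * Real.log v - w * Real.log w| ≤ |v - w| - |v - w| * Real.log |v - w| := by
  rcases le_total w v with hwv | hwv
  · rw [abs_of_nonneg (sub_nonneg.2 hwv)]
    exact aux_mul_log_perturb_core hw0 hv0 hv1 hwv
  · rw [abs_sub_comm v w, abs_of_nonneg (sub_nonneg.2 hwv),
      show v * Real.log v - w * Real.log w = -(w * Real.log w - v * Real.log v) by ring, abs_neg]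
    exact aux_mul_log_perturb_core hv0 hw0 hw1 hwv
/-- Sum bound: if `d y ∈ [0,1]`, `∑ d ≤ τ ≤ e⁻¹`, then
`∑ (d - d log d) ≤ τ + τ log K - τ log τ`. -/
lemma aux_sum_perturb {𝒴 : Type*} [Fintype 𝒴] [Nonempty 𝒴] (d : 𝒴 → ℝ)
    (hd0 : ∀ y, 0 ≤ d y) {τ : ℝ} (hτ0 : 0 < τ)
    (hτs : ∑ y, d y ≤ τ) (hτe : τ ≤ Real.exp (-1)) :
    ∑ y, (d y - d y * Real.log (d y)) ≤
      τ + τ * Real.log (Fintype.card 𝒴) - τ * Real.log τ := by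
  have hK1 : (1 : ℝ) ≤ (Fintype.card 𝒴 : ℝ) := by
    exact_mod_cast Fintype.card_pos
  have hlogK : 0 ≤ Real.log (Fintype.card 𝒴) := Real.log_nonneg hK1
  have hlogτ : Real.log τ ≤ -1 := by
    calc Real.log τ ≤ Real.log (Real.exp (-1)) := Real.log_le_log hτ0 hτe
      _ = -1 := Real.log_exp _
  set s := ∑ y, d y with hs
  have hs0 : 0 ≤ s := Finset.sum_nonneg fun y _ => hd0 y
  rw [Finset.sum_sub_distrib]
  rcases eq_or_lt_of_le hs0 with hsz | hsz
  · -- all d y = 0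
    have hall : ∀ y ∈ Finset.univ, d y = 0 :=
      (Finset.sum_eq_zero_iff_of_nonneg (fun y _ => hd0 y)).1 hsz.symm
    have h1 : ∑ y, d y = 0 := hsz.symm
    have h2 : ∑ y, d y * Real.log (d y) = 0 :=
      Finset.sum_eq_zero fun y hy => by rw [hall y hy]; simp
    rw [h1, h2]
    nlinarith
  · -- Gibbs with the normalized vector
    have hPd : IsDist (fun y => d y / s) := by
      constructor
      · exact fun y => div_nonneg (hd0 y) hs0
      · rw [← Finset.sum_div]; field_simp; exact hs.symm
    have hQd : IsDist (fun _ : 𝒴 => ((Fintype.card 𝒴 : ℝ))⁻¹) := by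
      constructor
      · intro y; positivity
      · rw [Finset.sum_const, Finset.card_univ, nsmul_eq_mul, mul_inv_cancel₀]
        positivity
    have hgibbs := gibbs hPd hQd (fun y h => absurd h (by positivity))
    have hterm : ∀ y, (d y / s) * Real.log ((d y / s) / ((Fintype.card 𝒴 : ℝ))⁻¹)
        = (d y * Real.log (d y) + d y * Real.log (Fintype.card 𝒴) - d y * Real.log s) / s := by
      intro y
      rcases eq_or_lt_of_le (hd0 y) with hdy | hdy
      · rw [← hdy]; simp
      · have h1 : (d y / s) / ((Fintype.card 𝒴 : ℝ))⁻¹ = d y * (Fintype.card 𝒴) / s := by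
          field_simp
        rw [h1, Real.log_div (by positivity) (ne_of_gt hsz),
          Real.log_mul (ne_of_gt hdy) (by positivity)]
        field_simp
      
    rw [Finset.sum_congr rfl fun y _ => hterm y, ← Finset.sum_div] at hgibbs
    have hsum : ∑ y, (d y * Real.log (d y) + d y * Real.log (Fintype.card 𝒴)
        - d y * Real.log s)
        = (∑ y, d y * Real.log (d y)) + s * Real.log (Fintype.card 𝒴) - s * Real.log s := by
      rw [Finset.sum_sub_distrib, Finset.sum_add_distrib, ← Finset.sum_mul, ← Finset.sum_mul]
    rw [hsum] at hgibbs
    have hU : 0 ≤ (∑ y, d y * Real.log (d y)) + s * Real.log (Fintype.card 𝒴)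
        - s * Real.log s := by
      have h := mul_le_mul_of_nonneg_right hgibbs (le_of_lt hsz)
      rwa [zero_mul, div_mul_cancel₀] at h
      exact ne_of_gt hsz
    have hmono := aux_negmul_mono hs0 hτs hτe
    have hKmono : s * Real.log (Fintype.card 𝒴) ≤ τ * Real.log (Fintype.card 𝒴) :=
      mul_le_mul_of_nonneg_right hτs hlogK
    linarith






section Cap

variable {𝒳 𝒴 : Type*} [Fintype 𝒳] [Fintype 𝒴] [Nonempty 𝒳] [Nonempty 𝒴]

lemma IsDist.le_one {P : 𝒴 → ℝ} (hP : IsDist P) (y : 𝒴) : P y ≤ 1 := by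
  rw [← hP.2]
  exact Finset.single_le_sum (fun z _ => hP.1 z) (Finset.mem_univ y)

lemma klE_nonneg {P Q : 𝒴 → ℝ} (hP : IsDist P) (hQ : IsDist Q) : 0 ≤ klE P Q := by
  unfold klE
  split_ifs with h
  · exact_mod_cast EReal.coe_nonneg.2 (gibbs hP hQ h)
  · exact le_top

lemma capE_nonneg {W : 𝒳 → 𝒴 → ℝ} (hW : ∀ x, IsDist (W x)) : 0 ≤ capE W := by
  refine le_iInf₂ fun Q hQ => ?_
  obtain ⟨x₀⟩ := ‹Nonempty 𝒳›
  exact le_iSup_of_le x₀ (klE_nonneg (hW x₀) hQ)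

/-- uniform distribution gives `capE W ≤ log |𝒴|`. -/
lemma capE_le_log {W : 𝒳 → 𝒴 → ℝ} (hW : ∀ x, IsDist (W x)) :
    capE W ≤ ((Real.log (Fintype.card 𝒴) : ℝ) : EReal) := by
  have hK0 : (0 : ℝ) < (Fintype.card 𝒴 : ℝ) := by exact_mod_cast Fintype.card_pos
  have hQd : IsDist (fun _ : 𝒴 => ((Fintype.card 𝒴 : ℝ))⁻¹) := by
    constructor
    · intro y; positivity
    · rw [Finset.sum_const, Finset.card_univ, nsmul_eq_mul, mul_inv_cancel₀]
      positivity
  refine le_trans (iInf₂_le _ hQd) ?_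
  refine iSup_le fun x => ?_
  rw [klE, if_pos (fun y h => absurd h (by positivity))]
  refine EReal.coe_le_coe_iff.2 ?_
  have hterm : ∀ y, W x y * Real.log (W x y / ((Fintype.card 𝒴 : ℝ))⁻¹)
      ≤ W x y * Real.log (Fintype.card 𝒴) := by
    intro y
    rcases eq_or_lt_of_le ((hW x).1 y) with hw | hw
    · rw [← hw]; simp
    · rw [div_inv_eq_mul, Real.log_mul (ne_of_gt hw) (ne_of_gt hK0)]
      have h1 : Real.log (W x y) ≤ 0 := Real.log_nonpos hw.le ((hW x).le_one y)
      nlinarith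
  calc ∑ y, W x y * Real.log (W x y / ((Fintype.card 𝒴 : ℝ))⁻¹)
      ≤ ∑ y, W x y * Real.log (Fintype.card 𝒴) := Finset.sum_le_sum fun y _ => hterm y
    _ = Real.log (Fintype.card 𝒴) := by rw [← Finset.sum_mul, (hW _).2, one_mul]

lemma capE_ne_top {W : 𝒳 → 𝒴 → ℝ} (hW : ∀ x, IsDist (W x)) : capE W ≠ ⊤ :=
  ne_top_of_le_ne_top (EReal.coe_ne_top _) (capE_le_log hW)

lemma capE_ne_bot {W : 𝒳 → 𝒴 → ℝ} (hW : ∀ x, IsDist (W x)) : capE W ≠ ⊥ :=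
  ne_bot_of_le_ne_bot (by simp) (capE_nonneg hW)

lemma capE_eq_capR {W : 𝒳 → 𝒴 → ℝ} (hW : ∀ x, IsDist (W x)) :
    capE W = ((capR W : ℝ) : EReal) :=
  (EReal.coe_toReal (capE_ne_top hW) (capE_ne_bot hW)).symm

lemma capR_nonneg {W : 𝒳 → 𝒴 → ℝ} (hW : ∀ x, IsDist (W x)) : 0 ≤ capR W := by
  have := capE_nonneg hW
  rw [capE_eq_capR hW] at this
  exact_mod_cast this

end Cap
section Perturb

variable {𝒳 𝒴 : Type*} [Fintype 𝒳] [Fintype 𝒴] [Nonempty 𝒳] [Nonempty 𝒴]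

lemma cap_perturb_one {V W : 𝒳 → 𝒴 → ℝ} (hV : ∀ x, IsDist (V x)) (hW : ∀ x, IsDist (W x))
    {τ γ : ℝ} (hτ0 : 0 < τ) (hτe : τ ≤ Real.exp (-1)) (hγ0 : 0 < γ) (hγ : γ ≤ 1/2)
    (hVW : ∀ x, ∑ y, |V x y - W x y| ≤ τ) :
    capR V ≤ capR W +
      (2*γ + τ*(1 + 2*Real.log (Fintype.card 𝒴) - Real.log γ - Real.log τ)) := by
  have hK0 : (0 : ℝ) < (Fintype.card 𝒴 : ℝ) := by exact_mod_cast Fintype.card_pos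
  have hK1 : (1 : ℝ) ≤ (Fintype.card 𝒴 : ℝ) := by exact_mod_cast Fintype.card_pos
  set K : ℝ := (Fintype.card 𝒴 : ℝ) with hKdef
  set B : ℝ := 2*γ + τ*(1 + 2*Real.log K - Real.log γ - Real.log τ) with hBdef
  have hγ1 : γ < 1 := lt_of_le_of_lt hγ (by norm_num)
  have h1γ : (0:ℝ) < 1 - γ := by linarith
  refine le_of_forall_pos_le_add fun η hη => ?_
  -- extract near-optimal Q for W
  have hlt : capE W < (((capR W + η : ℝ)) : EReal) := by
    rw [capE_eq_capR hW]
    exact_mod_cast EReal.coe_lt_coe_iff.2 (by linarith)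
  rw [capE, iInf_lt_iff] at hlt
  obtain ⟨Q, hQlt⟩ := hlt
  rw [iInf_lt_iff] at hQlt
  obtain ⟨hQ, hsup⟩ := hQlt
  have hxlt : ∀ x, klE (W x) Q < (((capR W + η : ℝ)) : EReal) :=
    fun x => lt_of_le_of_lt (le_iSup (fun x => klE (W x) Q) x) hsup
  have hac : ∀ x y, Q y = 0 → W x y = 0 := by
    intro x
    by_contra hcon
    have h := hxlt x
    rw [klE, if_neg hcon] at h
    exact absurd h (by simp)
  have hDx : ∀ x, ∑ y, W x y * Real.log (W x y / Q y) ≤ capR W + η := by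
    intro x
    have := hxlt x
    rw [klE, if_pos (hac x)] at this
    exact le_of_lt (EReal.coe_lt_coe_iff.1 this)
  -- smoothed output distribution
  set Q' : 𝒴 → ℝ := fun y => (1-γ)*Q y + γ*K⁻¹ with hQ'def
  have hQ'lb : ∀ y, γ*K⁻¹ ≤ Q' y := by
    intro y
    have : 0 ≤ (1-γ)*Q y := mul_nonneg h1γ.le (hQ.1 y)
    simp only [hQ'def]; linarith
  have hQ'pos : ∀ y, 0 < Q' y := fun y => lt_of_lt_of_le (by positivity) (hQ'lb y)
  have hQ'ub : ∀ y, Q' y ≤ 1 := by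
    intro y
    have h1 : Q y ≤ 1 := hQ.le_one y
    have h2 : K⁻¹ ≤ 1 := by
      rw [inv_le_one_iff₀]; right; exact hK1
    simp only [hQ'def]
    nlinarith
  have hQ'd : IsDist Q' := by
    constructor
    · exact fun y => (hQ'pos y).le
    · simp only [hQ'def]
      rw [Finset.sum_add_distrib, ← Finset.mul_sum, hQ.2, Finset.sum_const,
        Finset.card_univ, nsmul_eq_mul]
      field_simp
      rw [← hKdef]; ring
  -- per-row estimate
  have hrow : ∀ x, ∑ y, V x y * Real.log (V x y / Q' y) ≤ capR W + η + B := by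
    intro x
    have hv0 : ∀ y, 0 ≤ V x y := (hV x).1
    have hw0 : ∀ y, 0 ≤ W x y := (hW x).1
    have hv1 : ∀ y, V x y ≤ 1 := (hV x).le_one
    have hw1 : ∀ y, W x y ≤ 1 := (hW x).le_one
    have h1 : ∑ y, V x y * Real.log (V x y / Q' y)
        = (∑ y, V x y * Real.log (V x y)) - ∑ y, V x y * Real.log (Q' y) := by
      rw [← Finset.sum_sub_distrib]
      refine Finset.sum_congr rfl fun y _ => ?_
      rcases eq_or_lt_of_le (hv0 y) with hv | hv
      · rw [← hv]; simp
      · rw [Real.log_div (ne_of_gt hv) (ne_of_gt (hQ'pos y))]; ring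
    have h2 : ∑ y, W x y * Real.log (W x y / Q y)
        = (∑ y, W x y * Real.log (W x y)) - ∑ y, W x y * Real.log (Q y) := by
      rw [← Finset.sum_sub_distrib]
      refine Finset.sum_congr rfl fun y _ => ?_
      rcases eq_or_lt_of_le (hw0 y) with hw | hw
      · rw [← hw]; simp
      · have hq : Q y ≠ 0 := fun h => absurd (hac x y h) (ne_of_gt hw)
        rw [Real.log_div (ne_of_gt hw) hq]; ring
    have h3 : (∑ y, W x y * Real.log (Q y)) - ∑ y, W x y * Real.log (Q' y) ≤ 2*γ := by
      have hterm : ∀ y, W x y * Real.log (Q y) - W x y * Real.log (Q' y)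
          ≤ W x y * (-Real.log (1-γ)) := by
        intro y
        rcases eq_or_lt_of_le (hw0 y) with hw | hw
        · rw [← hw]; simp
        · have hq : 0 < Q y := by
            rcases eq_or_lt_of_le (hQ.1 y) with h | h
            · exact absurd (hac x y h.symm) (ne_of_gt hw)
            · exact h
          have hle : Real.log ((1-γ)*Q y) ≤ Real.log (Q' y) := by
            apply Real.log_le_log (by positivity)
            have : 0 ≤ γ*K⁻¹ := by positivity
            simp only [hQ'def]; linarith
          rw [Real.log_mul (ne_of_gt h1γ) (ne_of_gt hq)] at hle
          nlinarith
      have hsum := Finset.sum_le_sum fun y (_ : y ∈ Finset.univ) => hterm y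
      rw [Finset.sum_sub_distrib] at hsum
      have hlog : -Real.log (1-γ) ≤ 2*γ := by
        have h1 : Real.log ((1-γ)⁻¹) ≤ (1-γ)⁻¹ - 1 := Real.log_le_sub_one_of_pos (by positivity)
        rw [Real.log_inv] at h1
        have h2 : (1-γ)⁻¹ - 1 = γ/(1-γ) := by field_simp; ring
        have h3 : γ/(1-γ) ≤ 2*γ := by
          rw [div_le_iff₀ h1γ]
          nlinarith
        linarith
      have : ∑ y, W x y * (-Real.log (1-γ)) = -Real.log (1-γ) := by
        rw [← Finset.sum_mul, (hW x).2, one_mul]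
      linarith
    have h4 : (∑ y, V x y * Real.log (V x y)) - ∑ y, W x y * Real.log (W x y)
        ≤ τ + τ*Real.log K - τ*Real.log τ := by
      have habs : ∀ y, V x y * Real.log (V x y) - W x y * Real.log (W x y)
          ≤ |V x y - W x y| - |V x y - W x y| * Real.log |V x y - W x y| := by
        intro y
        exact le_trans (le_abs_self _)
          (aux_mul_log_perturb (hw0 y) (hv0 y) (hv1 y) (hw1 y))
      have h5 := Finset.sum_le_sum fun y (_ : y ∈ Finset.univ) => habs y
      rw [Finset.sum_sub_distrib, Finset.sum_sub_distrib] at h5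
      have h6 := aux_sum_perturb (fun y => |V x y - W x y|) (fun y => abs_nonneg _)
        hτ0 (hVW x) hτe
      rw [Finset.sum_sub_distrib] at h6
      rw [← hKdef] at h6
      linarith
    have h5 : (∑ y, W x y * Real.log (Q' y)) - ∑ y, V x y * Real.log (Q' y)
        ≤ τ*(Real.log K - Real.log γ) := by
      have hbound : ∀ y, W x y * Real.log (Q' y) - V x y * Real.log (Q' y)
          ≤ |V x y - W x y| * (Real.log K - Real.log γ) := by
        intro y
        have hub : Real.log (Q' y) ≤ 0 := Real.log_nonpos (hQ'pos y).le (hQ'ub y)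
        have hlb : Real.log γ - Real.log K ≤ Real.log (Q' y) := by
          have := Real.log_le_log (by positivity : (0:ℝ) < γ*K⁻¹) (hQ'lb y)
          rw [Real.log_mul (ne_of_gt hγ0) (by positivity), Real.log_inv] at this
          linarith
        have habs : |Real.log (Q' y)| ≤ Real.log K - Real.log γ := by
          rw [abs_le]; constructor <;> linarith
        calc W x y * Real.log (Q' y) - V x y * Real.log (Q' y)
            = -((V x y - W x y) * Real.log (Q' y)) := by ring
          _ ≤ |(V x y - W x y) * Real.log (Q' y)| := neg_le_abs _
          _ = |V x y - W x y| * |Real.log (Q' y)| := abs_mul _ _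
          _ ≤ |V x y - W x y| * (Real.log K - Real.log γ) :=
              mul_le_mul_of_nonneg_left habs (abs_nonneg _)
      have hsum := Finset.sum_le_sum fun y (_ : y ∈ Finset.univ) => hbound y
      rw [Finset.sum_sub_distrib, ← Finset.sum_mul] at hsum
      have hKγ : 0 ≤ Real.log K - Real.log γ := by
        have h1 : Real.log γ ≤ 0 := Real.log_nonpos hγ0.le (by linarith)
        have h2 : 0 ≤ Real.log K := Real.log_nonneg hK1
        linarith
      have := mul_le_mul_of_nonneg_right (hVW x) hKγ
      linarith
    have hD := hDx x
    rw [h2] at hD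
    rw [h1, hBdef]
    linarith
  -- conclude
  have hcap : capE V ≤ (((capR W + η + B : ℝ)) : EReal) := by
    refine le_trans (iInf₂_le Q' hQ'd) (iSup_le fun x => ?_)
    rw [klE, if_pos (fun y h => absurd h (ne_of_gt (hQ'pos y)))]
    exact EReal.coe_le_coe_iff.2 (hrow x)
  rw [capE_eq_capR hV] at hcap
  have := EReal.coe_le_coe_iff.1 hcap
  linarith

lemma cap_perturb {V W : 𝒳 → 𝒴 → ℝ} (hV : ∀ x, IsDist (V x)) (hW : ∀ x, IsDist (W x))
    {τ γ : ℝ} (hτ0 : 0 < τ) (hτe : τ ≤ Real.exp (-1)) (hγ0 : 0 < γ) (hγ : γ ≤ 1/2)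
    (hVW : ∀ x, ∑ y, |V x y - W x y| ≤ τ) :
    |capR V - capR W| ≤
      2*γ + τ*(1 + 2*Real.log (Fintype.card 𝒴) - Real.log γ - Real.log τ) := by
  rw [abs_le]
  constructor
  · have := cap_perturb_one hW hV hτ0 hτe hγ0 hγ
      (fun x => by rw [show (∑ y, |W x y - V x y|) = ∑ y, |V x y - W x y| from
        Finset.sum_congr rfl fun y _ => abs_sub_comm _ _]; exact hVW x)
    linarith
  · have := cap_perturb_one hV hW hτ0 hτe hγ0 hγ hVW
    linarith

end Perturb
section Chernoff

open MeasureTheory ProbabilityTheory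

variable {Ω : Type*} [MeasurableSpace Ω] {μ : MeasureTheory.Measure Ω}
  [MeasureTheory.IsProbabilityMeasure μ]

/-- mgf of a `{0,1}`-valued random variable. -/
lemma mgf_of_indicator {Z : Ω → ℝ} (hmeas : Measurable Z) (hZ01 : ∀ ω, Z ω = 0 ∨ Z ω = 1)
    {p : ℝ} (hp : μ {ω | Z ω = 1} = ENNReal.ofReal p) (hp0 : 0 ≤ p) (t : ℝ) :
    ProbabilityTheory.mgf Z μ t = 1 + (Real.exp t - 1) * p := by
  have hset : MeasurableSet {ω | Z ω = 1} := hmeas (measurableSet_singleton 1)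
  have hint : Integrable ((({ω | Z ω = 1}) : Set Ω).indicator fun _ => (1:ℝ)) μ :=
    (integrable_const (1:ℝ)).indicator hset
  have hfun : ∀ ω, Real.exp (t * Z ω)
      = 1 + (Real.exp t - 1) * (({ω | Z ω = 1}) : Set Ω).indicator (fun _ => (1:ℝ)) ω := by
    intro ω
    rcases hZ01 ω with h | h
    · rw [h, Set.indicator_of_notMem]
      · simp
      · simp [Set.mem_setOf_eq, h]
    · rw [h, Set.indicator_of_mem (by simp [Set.mem_setOf_eq, h])]
      simp
  rw [ProbabilityTheory.mgf]
  rw [integral_congr_ae (Filter.Eventually.of_forall hfun)]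
  rw [integral_add (integrable_const 1) (hint.const_mul _)]
  rw [integral_const, MeasureTheory.integral_const_mul, MeasureTheory.integral_indicator_const _ hset]
  simp only [Measure.real, measure_univ, ENNReal.toReal_one, smul_eq_mul, mul_one, one_mul]
  rw [hp, ENNReal.toReal_ofReal hp0]

/-- Chernoff bound for a sum of i.i.d.-law indicator variables. -/
lemma chernoff_sum {ι : Type*} (Z : ι → Ω → ℝ)
    (hind : ProbabilityTheory.iIndepFun Z μ)
    (hmeas : ∀ i, Measurable (Z i)) (hZ01 : ∀ i ω, Z i ω = 0 ∨ Z i ω = 1)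
    (s : Finset ι) {p u : ℝ} (hp0 : 0 ≤ p) (hp1 : p ≤ 1) (hu0 : 0 ≤ u) (hu1 : u ≤ 1)
    (hlaw : ∀ i ∈ s, μ {ω | Z i ω = 1} = ENNReal.ofReal p) :
    μ {ω | (s.card : ℝ) * (p + u) ≤ ∑ i ∈ s, Z i ω}
      ≤ ENNReal.ofReal (Real.exp (-(s.card : ℝ) * u^2 / 3)) := by
  classical
  set t : ℝ := 2*u/3 with htdef
  have ht0 : 0 ≤ t := by positivity
  have ht1 : t ≤ 1 := by rw [htdef]; linarith
  -- integrability of exp(t * Z i)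
  have hint : ∀ i, Integrable (fun ω => Real.exp (t * Z i ω)) μ := by
    intro i
    have : ∀ ω, Real.exp (t * Z i ω) ≤ Real.exp t := by
      intro ω
      rcases hZ01 i ω with h | h <;> rw [h] <;> simp [Real.exp_le_exp] <;> nlinarith
    refine Integrable.mono' (integrable_const (Real.exp t))
      ((hmeas i).const_mul t).exp.aestronglyMeasurable
      (Filter.Eventually.of_forall fun ω => ?_)
    rw [Real.norm_eq_abs, abs_of_pos (Real.exp_pos _)]
    exact this ω
  have hSmeas : Integrable (fun ω => Real.exp (t * (∑ i ∈ s, Z i) ω)) μ :=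
    hind.integrable_exp_mul_sum hmeas (fun i _ => hint i)
  -- Chernoff
  have hch := ProbabilityTheory.measure_ge_le_exp_mul_mgf
    (X := ∑ i ∈ s, Z i) (μ := μ) ((s.card : ℝ) * (p + u)) ht0 hSmeas
  -- mgf bound
  have hmgf : ProbabilityTheory.mgf (∑ i ∈ s, Z i) μ t
      ≤ Real.exp ((s.card : ℝ) * (p*t + (3/4)*t^2)) := by
    rw [hind.mgf_sum hmeas s]
    have hfac : ∀ i ∈ s, ProbabilityTheory.mgf (Z i) μ t = 1 + (Real.exp t - 1) * p :=
      fun i hi => mgf_of_indicator (hmeas i) (hZ01 i) (hlaw i hi) hp0 t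
    rw [Finset.prod_congr rfl hfac, Finset.prod_const]
    have hexp : Real.exp t - 1 ≤ t + (3/4)*t^2 := by
      have hb := Real.exp_bound (x := t) (by rw [abs_of_nonneg ht0]; exact ht1)
        (n := 2) (by norm_num)
      rw [abs_of_nonneg ht0] at hb
      norm_num [Finset.sum_range_succ, Nat.factorial] at hb
      have := abs_le.1 hb
      linarith [this.2]
    have h1fac : 1 + (Real.exp t - 1) * p ≤ Real.exp (p*t + (3/4)*t^2) := by
      have h1 : (Real.exp t - 1) * p ≤ (t + (3/4)*t^2) * p :=
        mul_le_mul_of_nonneg_right hexp hp0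
      have h2 : (t + (3/4)*t^2) * p ≤ p*t + (3/4)*t^2 := by nlinarith
      calc 1 + (Real.exp t - 1) * p ≤ 1 + (p*t + (3/4)*t^2) := by linarith
        _ ≤ Real.exp (p*t + (3/4)*t^2) := by
            linarith [Real.add_one_le_exp (p*t + (3/4)*t^2)]
    have hbase : (0:ℝ) ≤ 1 + (Real.exp t - 1) * p := by
      have : 1 ≤ Real.exp t := by rw [← Real.exp_zero]; exact Real.exp_le_exp.2 ht0
      nlinarith
    calc (1 + (Real.exp t - 1) * p)^(s.card) ≤ (Real.exp (p*t + (3/4)*t^2))^s.card :=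
        pow_le_pow_left₀ hbase h1fac _
      _ = Real.exp ((s.card : ℝ) * (p*t + (3/4)*t^2)) := by
          rw [← Real.exp_nat_mul]
  have hfinal : (μ {ω | (s.card : ℝ) * (p + u) ≤ (∑ i ∈ s, Z i) ω}).toReal
      ≤ Real.exp (-(s.card : ℝ) * u^2 / 3) := by
    refine le_trans hch ?_
    have : Real.exp (-t * ((s.card : ℝ) * (p + u))) *
        ProbabilityTheory.mgf (∑ i ∈ s, Z i) μ t
        ≤ Real.exp (-t * ((s.card : ℝ) * (p + u))) *
          Real.exp ((s.card : ℝ) * (p*t + (3/4)*t^2)) :=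
      mul_le_mul_of_nonneg_left hmgf (Real.exp_pos _).le
    refine le_trans this ?_
    rw [← Real.exp_add]
    apply Real.exp_le_exp.2
    have hcard : (0:ℝ) ≤ (s.card : ℝ) := Nat.cast_nonneg _
    have : -t * ((s.card : ℝ) * (p + u)) + (s.card : ℝ) * (p*t + (3/4)*t^2)
        = (s.card : ℝ) * ((3/4)*t^2 - t*u) := by ring
    rw [this]
    have : (3/4)*t^2 - t*u = -u^2/3 := by rw [htdef]; ring
    rw [this]
    rw [show -(s.card : ℝ) * u^2 / 3 = (s.card : ℝ) * (-u^2/3) by ring]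
  have hne : μ {ω | (s.card : ℝ) * (p + u) ≤ (∑ i ∈ s, Z i) ω} ≠ ⊤ := measure_ne_top _ _
  have hsetEq : {ω | (s.card : ℝ) * (p + u) ≤ ∑ i ∈ s, Z i ω}
      = {ω | (s.card : ℝ) * (p + u) ≤ (∑ i ∈ s, Z i) ω} := by
    simp only [Finset.sum_apply]
  rw [hsetEq, ← ENNReal.ofReal_toReal hne]
  exact ENNReal.ofReal_le_ofReal hfinal

end Chernoff
section Numerics





variable {cX cY : ℕ} {α ε : ℝ}

lemma num_L (hX : 2 ≤ cX) (hα0 : 0 < α) (hα1 : α ≤ 1/2) :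
    Real.log 4 ≤ Real.log ((cX : ℝ) / α) := by
  apply Real.log_le_log (by norm_num)
  rw [le_div_iff₀ hα0]
  have : (2:ℝ) ≤ (cX:ℝ) := by exact_mod_cast hX
  nlinarith

lemma num_L_pos (hX : 2 ≤ cX) (hα0 : 0 < α) (hα1 : α ≤ 1/2) :
    0 < Real.log ((cX : ℝ) / α) :=
  lt_of_lt_of_le (Real.log_pos (by norm_num)) (num_L hX hα0 hα1)

/-- Lower bound on `Z = (25/4) θ N / ε²`. -/
lemma num_Z_lb (hX : 2 ≤ cX) (hY : 1 ≤ cY) (hα0 : 0 < α) (hα1 : α ≤ 1/2)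
    (hε0 : 0 < ε) (hε2 : ε ≤ 2) :
    4 * Real.exp 3 * (cY : ℝ) / ε^2 ≤ 25 / 4 * thetaAl cX cY α * Nal cX cY α / ε ^ 2 := by
  have hL := num_L_pos hX hα0 hα1
  set L := Real.log ((cX : ℝ) / α) with hLdef
  have hXr : (2:ℝ) ≤ (cX:ℝ) := by exact_mod_cast hX
  have hKr : (1:ℝ) ≤ (cY:ℝ) := by exact_mod_cast hY
  have hb : Real.exp 1 ≤ (cX:ℝ) * L := by
    have h2 : Real.log 4 = 2 * Real.log 2 := by
      rw [show (4:ℝ) = 2^2 by norm_num, Real.log_pow]; push_cast; ring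
    have hlog2 : (0.6931471803:ℝ) < Real.log 2 := Real.log_two_gt_d9
    have hL4 : Real.log 4 ≤ L := num_L hX hα0 hα1
    have he : Real.exp 1 < 2.7182818286 := Real.exp_one_lt_d9
    nlinarith
  have hbpos : 0 < (cX:ℝ) * L := lt_of_lt_of_le (Real.exp_pos 1) hb
  have hapos : 0 < (cY:ℝ) * Real.exp 2 := by positivity
  -- θ * (cX * L) ≥ exp (6/5)
  have hθ : Real.exp (6/5) ≤ thetaAl cX cY α * ((cX:ℝ) * L) := by
    rw [thetaAl, ← hLdef]
    rw [Real.div_rpow hapos.le hbpos.le]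
    have hrw : ((cY : ℝ) * Real.exp 2) ^ ((1:ℝ)/5) / ((cX:ℝ) * L) ^ ((1:ℝ)/5) * ((cX:ℝ) * L)
        = ((cY : ℝ) * Real.exp 2) ^ ((1:ℝ)/5) * ((cX:ℝ) * L) ^ ((4:ℝ)/5) := by
      rw [div_mul_eq_mul_div, mul_div_assoc]
      congr 1
      rw [div_eq_iff (by positivity : ((cX:ℝ) * L) ^ ((1:ℝ)/5) ≠ 0)]
      rw [← Real.rpow_add hbpos]
      norm_num
    rw [hrw]
    have h1 : Real.exp (2/5) ≤ ((cY : ℝ) * Real.exp 2) ^ ((1:ℝ)/5) := by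
      have : Real.exp 2 ≤ (cY : ℝ) * Real.exp 2 := by nlinarith [Real.exp_pos 2]
      calc Real.exp (2/5) = (Real.exp 2) ^ ((1:ℝ)/5) := by
            rw [← Real.exp_mul]; norm_num
        _ ≤ ((cY : ℝ) * Real.exp 2) ^ ((1:ℝ)/5) :=
            Real.rpow_le_rpow (Real.exp_pos 2).le this (by norm_num)
    have h2 : Real.exp (4/5) ≤ ((cX:ℝ) * L) ^ ((4:ℝ)/5) := by
      calc Real.exp (4/5) = (Real.exp 1) ^ ((4:ℝ)/5) := by
            rw [← Real.exp_mul]; norm_num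
        _ ≤ ((cX:ℝ) * L) ^ ((4:ℝ)/5) :=
            Real.rpow_le_rpow (Real.exp_pos 1).le hb (by norm_num)
    calc Real.exp (6/5) = Real.exp (2/5) * Real.exp (4/5) := by
          rw [← Real.exp_add]; norm_num
      _ ≤ ((cY : ℝ) * Real.exp 2) ^ ((1:ℝ)/5) * ((cX:ℝ) * L) ^ ((4:ℝ)/5) := by
          apply mul_le_mul h1 h2 (Real.exp_pos _).le (by positivity)
  -- 25 exp(6/5) ≥ 4 exp 3
  have hconst : 4 * Real.exp 3 ≤ 25 * Real.exp (6/5) := by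
    have h95 : Real.exp (9/5) ≤ 25/4 := by
      have hpow : (Real.exp (9/5))^(5:ℕ) ≤ ((25:ℝ)/4)^(5:ℕ) := by
        have h9 : (Real.exp (9/5))^(5:ℕ) = Real.exp 9 := by
          rw [← Real.exp_nat_mul]; norm_num
        rw [h9]
        have h1 : Real.exp 9 = (Real.exp 1)^(9:ℕ) := by
          rw [← Real.exp_nat_mul]; norm_num
        rw [h1]
        have he : Real.exp 1 ≤ 2.7182818286 := Real.exp_one_lt_d9.le
        calc (Real.exp 1)^(9:ℕ) ≤ (2.7182818286:ℝ)^(9:ℕ) :=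
              pow_le_pow_left₀ (Real.exp_pos 1).le he 9
          _ ≤ ((25:ℝ)/4)^(5:ℕ) := by norm_num
      exact le_of_pow_le_pow_left₀ (by norm_num) (by norm_num) hpow
    have h3 : Real.exp 3 = Real.exp (9/5) * Real.exp (6/5) := by
      rw [← Real.exp_add]; norm_num
    nlinarith [Real.exp_pos (6/5), Real.exp_pos (9/5)]
  -- combine
  have hθpos : 0 < thetaAl cX cY α := by
    rw [thetaAl]; positivity
  have hmain : 4 * Real.exp 3 * (cY:ℝ) ≤ 25 / 4 * thetaAl cX cY α * Nal cX cY α := by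
    have hN : Nal cX cY α = 4 * ((cX:ℝ) * L) * (cY:ℝ) := by
      rw [Nal, ← hLdef]; ring
    rw [hN]
    have h1 : 25 * Real.exp (6/5) * (cY:ℝ)
        ≤ 25 * (thetaAl cX cY α * ((cX:ℝ) * L)) * (cY:ℝ) := by
      have := mul_le_mul_of_nonneg_right hθ (by linarith : (0:ℝ) ≤ (cY:ℝ))
      nlinarith
    have h2 : 4 * Real.exp 3 * (cY:ℝ) ≤ 25 * Real.exp (6/5) * (cY:ℝ) := by
      nlinarith
    nlinarith
  gcongr

end Numerics
section Numerics2

variable {cX cY : ℕ} {α ε : ℝ}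

lemma num_Z_exp3 (hX : 2 ≤ cX) (hY : 1 ≤ cY) (hα0 : 0 < α) (hα1 : α ≤ 1/2)
    (hε0 : 0 < ε) (hε2 : ε ≤ 2) :
    Real.exp 3 ≤ 25 / 4 * thetaAl cX cY α * Nal cX cY α / ε ^ 2 := by
  refine le_trans ?_ (num_Z_lb hX hY hα0 hα1 hε0 hε2)
  have hKr : (1:ℝ) ≤ (cY:ℝ) := by exact_mod_cast hY
  rw [le_div_iff₀ (by positivity)]
  have hE4 : ε^2 ≤ 4 := by nlinarith
  nlinarith [Real.exp_pos 3]

lemma num_A3 (hX : 2 ≤ cX) (hY : 1 ≤ cY) (hα0 : 0 < α) (hα1 : α ≤ 1/2)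
    (hε0 : 0 < ε) (hε2 : ε ≤ 2) :
    3 ≤ Real.log (25 / 4 * thetaAl cX cY α * Nal cX cY α / ε ^ 2) := by
  have := Real.log_le_log (Real.exp_pos 3) (num_Z_exp3 hX hY hα0 hα1 hε0 hε2)
  rwa [Real.log_exp] at this

/-- error-budget inequality : `1 + 2 log K - log (ε/8) - log (ε/(4A)) ≤ 3 A`. -/
lemma num_err (hX : 2 ≤ cX) (hY : 1 ≤ cY) (hα0 : 0 < α) (hα1 : α ≤ 1/2)
    (hε0 : 0 < ε) (hε2 : ε ≤ 2) :
    1 + 2*Real.log (cY : ℝ) - Real.log (ε/8)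
      - Real.log (ε/(4*Real.log (25 / 4 * thetaAl cX cY α * Nal cX cY α / ε ^ 2)))
      ≤ 3 * Real.log (25 / 4 * thetaAl cX cY α * Nal cX cY α / ε ^ 2) := by
  have hKr : (1:ℝ) ≤ (cY:ℝ) := by exact_mod_cast hY
  have hA3 : 3 ≤ Real.log (25 / 4 * thetaAl cX cY α * Nal cX cY α / ε ^ 2) :=
    num_A3 hX hY hα0 hα1 hε0 hε2
  have hZ3 : Real.exp 3 ≤ 25 / 4 * thetaAl cX cY α * Nal cX cY α / ε ^ 2 :=
    num_Z_exp3 hX hY hα0 hα1 hε0 hε2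
  have hZlb : 4 * Real.exp 3 * (cY : ℝ) / ε^2
      ≤ 25 / 4 * thetaAl cX cY α * Nal cX cY α / ε ^ 2 := num_Z_lb hX hY hα0 hα1 hε0 hε2
  set Z := 25 / 4 * thetaAl cX cY α * Nal cX cY α / ε ^ 2 with hZdef
  set A := Real.log Z with hAdef
  clear_value Z
  clear hZdef
  have hZpos : 0 < Z := lt_of_lt_of_le (Real.exp_pos 3) hZ3
  have hE0 : (0:ℝ) < ε^2 := by positivity
  have hE4 : ε^2 ≤ 4 := by nlinarith
  have hAZ : A ≤ Z := by
    have := Real.log_le_sub_one_of_pos hZpos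
    rw [← hAdef] at this; linarith
  have he1 : (2:ℝ) ≤ Real.exp 1 := by
    have := Real.exp_one_gt_d9; linarith
  have he1' : Real.exp 1 ≤ 3 := by
    have := Real.exp_one_lt_d9; linarith
  -- key : 32 e K² A / ε² ≤ Z³
  have hkey : 32 * Real.exp 1 * (cY:ℝ)^2 * A / ε^2 ≤ Z^3 := by
    rw [div_le_iff₀ hE0]
    have hZK : Real.exp 3 * (cY:ℝ) ≤ Z := by
      refine le_trans ?_ hZlb
      rw [le_div_iff₀ hE0]
      nlinarith [Real.exp_pos 3, mul_pos (Real.exp_pos 3) (by linarith : (0:ℝ) < (cY:ℝ))]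
    have hZE : 4 * Real.exp 3 * (cY:ℝ) ≤ Z * ε^2 := by
      rw [div_le_iff₀ hE0] at hZlb; linarith
    have hA0 : (0:ℝ) ≤ A := by linarith
    have hKpos : (0:ℝ) < (cY:ℝ) := by linarith
    have hstep : A * (Real.exp 3 * (cY:ℝ)) * (4 * Real.exp 3 * (cY:ℝ)) ≤ Z * Z * (Z * ε^2) := by
      have m1 : A * (Real.exp 3 * (cY:ℝ)) ≤ Z * Z :=
        mul_le_mul hAZ hZK (by positivity) hZpos.le
      exact mul_le_mul m1 hZE (by positivity) (mul_nonneg hZpos.le hZpos.le)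
    have hexp6' : Real.exp 3 * Real.exp 3 = Real.exp 6 := by
      rw [← Real.exp_add]; norm_num
    have hc1 : A * (Real.exp 3 * (cY:ℝ)) * (4 * Real.exp 3 * (cY:ℝ))
        = 4 * Real.exp 6 * (cY:ℝ)^2 * A := by
      rw [← hexp6']; ring
    have h64 : (64:ℝ) ≤ Real.exp 6 := by
      have hp : (Real.exp 1)^(6:ℕ) = Real.exp 6 := by
        rw [← Real.exp_nat_mul]; norm_num
      nlinarith [pow_le_pow_left₀ (by norm_num : (0:ℝ) ≤ 2) he1 6]
    have hce : 32 * Real.exp 1 ≤ 4 * Real.exp 6 := by nlinarith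
    have hc2 : 32 * Real.exp 1 * (cY:ℝ)^2 * A ≤ 4 * Real.exp 6 * (cY:ℝ)^2 * A := by
      nlinarith [mul_nonneg (mul_nonneg (sq_nonneg (cY:ℝ)) hA0) (sub_nonneg.2 hce)]
    have hc3 : Z^3 * ε^2 = Z * Z * (Z * ε^2) := by ring
    linarith
  -- take logs
  have hA0 : (0:ℝ) < A := by linarith
  have hlog1 : Real.log (ε/8) = Real.log ε - Real.log 8 :=
    Real.log_div (ne_of_gt hε0) (by norm_num)
  have hlog2 : Real.log (ε/(4*A)) = Real.log ε - Real.log (4*A) :=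
    Real.log_div (ne_of_gt hε0) (by positivity)
  have hlog3 : Real.log (4*A) = Real.log 4 + Real.log A :=
    Real.log_mul (by norm_num) (ne_of_gt hA0)
  -- log of key
  have hApos : (0:ℝ) < A := by linarith
  have hnum : (0:ℝ) < 32 * Real.exp 1 * (cY:ℝ)^2 * A :=
    mul_pos (mul_pos (mul_pos (by norm_num) (Real.exp_pos 1))
      (pow_pos (by linarith : (0:ℝ) < (cY:ℝ)) 2)) hApos
  have hlogkey : Real.log (32 * Real.exp 1 * (cY:ℝ)^2 * A / ε^2) ≤ 3 * A := by
    have h1 : Real.log (32 * Real.exp 1 * (cY:ℝ)^2 * A / ε^2) ≤ Real.log (Z^3) :=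
      Real.log_le_log (div_pos hnum hE0) hkey
    rw [Real.log_pow] at h1
    rw [← hAdef] at h1
    push_cast at h1
    linarith
  have hexpand : Real.log (32 * Real.exp 1 * (cY:ℝ)^2 * A / ε^2)
      = Real.log 32 + 1 + 2*Real.log (cY:ℝ) + Real.log A - 2*Real.log ε := by
    rw [Real.log_div (ne_of_gt hnum) (by positivity), Real.log_mul (by positivity) (ne_of_gt hA0),
      Real.log_mul (by positivity) (by positivity), Real.log_mul (by norm_num) (ne_of_gt (Real.exp_pos 1)),
      Real.log_exp, Real.log_pow, Real.log_pow]
    push_cast; ring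
  have h32 : Real.log 32 = Real.log 8 + Real.log 4 := by
    rw [← Real.log_mul (by norm_num) (by norm_num)]; norm_num
  rw [hlog1, hlog2, hlog3]
  rw [hexpand, h32] at hlogkey
  linarith

end Numerics2
section Numerics3

variable {cX cY : ℕ} {α ε : ℝ}

lemma num_conc (hX : 2 ≤ cX) (hY : 1 ≤ cY) (hα0 : 0 < α) (hα1 : α ≤ 1/2)
    (hε0 : 0 < ε) (hε2 : ε ≤ 2) {M : ℝ}
    (hm : 375 * (cY:ℝ) * Real.log ((cX:ℝ)/α) *
        (Real.log (25 / 4 * thetaAl cX cY α * Nal cX cY α / ε ^ 2))^2 / ε^2 ≤ M) :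
    (cX:ℝ) * 2^cY * Real.exp (-(M *
        (ε/(8*Real.log (25 / 4 * thetaAl cX cY α * Nal cX cY α / ε ^ 2)))^2 / 3)) ≤ α := by
  have hKr : (1:ℝ) ≤ (cY:ℝ) := by exact_mod_cast hY
  have hXr : (2:ℝ) ≤ (cX:ℝ) := by exact_mod_cast hX
  have hL4 : Real.log 4 ≤ Real.log ((cX:ℝ)/α) := num_L hX hα0 hα1
  have hL0 : 0 < Real.log ((cX:ℝ)/α) := num_L_pos hX hα0 hα1
  have hA3 : 3 ≤ Real.log (25 / 4 * thetaAl cX cY α * Nal cX cY α / ε ^ 2) :=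
    num_A3 hX hY hα0 hα1 hε0 hε2
  set L := Real.log ((cX:ℝ)/α) with hLdef
  set A := Real.log (25 / 4 * thetaAl cX cY α * Nal cX cY α / ε ^ 2) with hAdef
  clear_value A
  have hA0 : (0:ℝ) < A := by linarith
  -- q := M u² / 3 ≥ 375 K L / 192
  have hq : 375 * (cY:ℝ) * L / 192 ≤ M * (ε/(8*A))^2 / 3 := by
    have hu2 : (ε/(8*A))^2 = ε^2/(64*A^2) := by
      rw [div_pow]; congr 1; ring
    rw [hu2]
    have hM0 : 0 ≤ 375 * (cY:ℝ) * L * A^2 / ε^2 := by positivity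
    have h1 : (375 * (cY:ℝ) * L * A^2 / ε^2) * (ε^2/(64*A^2)) ≤ M * (ε^2/(64*A^2)) :=
      mul_le_mul_of_nonneg_right hm (by positivity)
    have h2 : (375 * (cY:ℝ) * L * A^2 / ε^2) * (ε^2/(64*A^2)) = 375 * (cY:ℝ) * L / 64 := by
      field_simp
    rw [h2] at h1
    linarith
  -- log (X 2^K / α) ≤ 375 K L/192
  have hlogbound : Real.log ((cX:ℝ) * 2^cY / α) ≤ 375 * (cY:ℝ) * L / 192 := by
    have hexpand : Real.log ((cX:ℝ) * 2^cY / α)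
        = L + (cY:ℝ) * Real.log 2 := by
      rw [hLdef, Real.log_div (by positivity) (ne_of_gt hα0),
        Real.log_div (by positivity) (ne_of_gt hα0),
        Real.log_mul (by positivity) (by positivity), Real.log_pow]
      ring
    rw [hexpand]
    have hlog2 : 2 * Real.log 2 ≤ L := by
      have : Real.log 4 = 2 * Real.log 2 := by
        rw [show (4:ℝ) = 2^2 by norm_num, Real.log_pow]; push_cast; ring
      linarith
    have hlog2pos : 0 < Real.log 2 := Real.log_pos (by norm_num)
    nlinarith [mul_nonneg (sub_nonneg.2 hKr) hL0.le,
      mul_nonneg (by linarith : (0:ℝ) ≤ (cY:ℝ)) (sub_nonneg.2 hlog2)]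
  -- conclude
  have hXpos : (0:ℝ) < (cX:ℝ) * 2^cY := by positivity
  have h1 : Real.exp (-(M * (ε/(8*A))^2 / 3)) ≤ α / ((cX:ℝ) * 2^cY) := by
    rw [show α / ((cX:ℝ) * 2^cY) = Real.exp (Real.log (α / ((cX:ℝ) * 2^cY))) from
      (Real.exp_log (by positivity)).symm]
    apply Real.exp_le_exp.2
    have hswap : Real.log (α / ((cX:ℝ) * 2^cY)) = -Real.log ((cX:ℝ) * 2^cY / α) := by
      rw [show α / ((cX:ℝ) * 2^cY) = ((cX:ℝ) * 2^cY / α)⁻¹ by rw [inv_div], Real.log_inv]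
    rw [hswap]
    have := le_trans hlogbound hq
    linarith
  calc (cX:ℝ) * 2^cY * Real.exp (-(M * (ε/(8*A))^2 / 3))
      ≤ (cX:ℝ) * 2^cY * (α / ((cX:ℝ) * 2^cY)) := mul_le_mul_of_nonneg_left h1 hXpos.le
    _ = α := by field_simp

end Numerics3
section Helpers



lemma empCh_isDist {𝒳 𝒴 : Type*} [Fintype 𝒴] [DecidableEq 𝒴] {m : ℕ} (hm : 0 < m)
    (Ys : 𝒳 → Fin m → 𝒴) (x : 𝒳) : IsDist (empCh Ys x) := by
  constructor
  · intro y; unfold empCh; positivity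
  · unfold empCh
    rw [← Finset.sum_div]
    have hc : ∑ y : 𝒴, ((Finset.univ.filter fun i => Ys x i = y).card : ℝ)
        = ((Finset.univ : Finset (Fin m)).card : ℝ) := by
      rw [Finset.card_eq_sum_card_fiberwise (f := fun i => Ys x i)
        (t := Finset.univ) (fun i _ => Finset.mem_univ _)]
      push_cast; ring
    rw [hc, Finset.card_univ, Fintype.card_fin]
    field_simp

lemma l1_of_subsets {𝒴 : Type*} [Fintype 𝒴] (f g : 𝒴 → ℝ)
    (hf : ∑ y, f y = 1) (hg : ∑ y, g y = 1) {u : ℝ}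
    (h : ∀ A : Finset 𝒴, ∑ y ∈ A, f y ≤ (∑ y ∈ A, g y) + u) :
    ∑ y, |f y - g y| ≤ 2*u := by
  classical
  set Ap := Finset.univ.filter (fun y => g y < f y) with hApdef
  have h1 : ∑ y ∈ Ap, (f y - g y) ≤ u := by
    have := h Ap
    rw [Finset.sum_sub_distrib]
    linarith
  have htot : ∑ y ∈ Ap, (f y - g y)
      + ∑ y ∈ Finset.univ.filter (fun y => ¬ g y < f y), (f y - g y) = 0 := by
    rw [Finset.sum_filter_add_sum_filter_not, Finset.sum_sub_distrib, hf, hg]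
    ring
  have hsplit : ∑ y, |f y - g y| = ∑ y ∈ Ap, (f y - g y)
      + ∑ y ∈ Finset.univ.filter (fun y => ¬ g y < f y), (g y - f y) := by
    rw [← Finset.sum_filter_add_sum_filter_not Finset.univ (fun y => g y < f y)
      (fun y => |f y - g y|)]
    congr 1
    · refine Finset.sum_congr rfl fun y hy => ?_
      rw [Finset.mem_filter] at hy
      rw [abs_of_pos (by linarith [hy.2])]
    · refine Finset.sum_congr rfl fun y hy => ?_
      rw [Finset.mem_filter] at hy
      have : f y ≤ g y := le_of_not_gt hy.2
      rw [abs_of_nonpos (by linarith), neg_sub]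
  rw [hsplit]
  have h2 : ∑ y ∈ Finset.univ.filter (fun y => ¬ g y < f y), (g y - f y)
      = ∑ y ∈ Ap, (f y - g y) := by
    have : ∑ y ∈ Finset.univ.filter (fun y => ¬ g y < f y), (g y - f y)
        = - ∑ y ∈ Finset.univ.filter (fun y => ¬ g y < f y), (f y - g y) := by
      rw [← Finset.sum_neg_distrib]
      exact Finset.sum_congr rfl fun y _ => by ring
    rw [this]
    linarith [htot]
  rw [h2]
  linarith

open MeasureTheory in
lemma meas_mem_finset {Ω 𝒴 : Type*} [MeasurableSpace Ω] [Fintype 𝒴] [MeasurableSpace 𝒴]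
    [MeasurableSingletonClass 𝒴] (μ : MeasureTheory.Measure Ω) (T : Ω → 𝒴)
    (hT : Measurable T) (V : 𝒴 → ℝ) (hV0 : ∀ y, 0 ≤ V y)
    (hlaw : ∀ y, μ (T ⁻¹' {y}) = ENNReal.ofReal (V y)) (A : Finset 𝒴) :
    μ {ω | T ω ∈ A} = ENNReal.ofReal (∑ y ∈ A, V y) := by
  have hset : {ω | T ω ∈ A} = ⋃ y ∈ A, T ⁻¹' {y} := by
    ext ω; simp
  rw [hset, measure_biUnion_finset ?_ (fun y _ => hT (measurableSet_singleton y))]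
  · rw [Finset.sum_congr rfl (fun y _ => hlaw y)]
    exact (ENNReal.ofReal_sum_of_nonneg (fun y _ => hV0 y)).symm
  · intro y _ z _ hyz
    simp only [Function.onFun, Set.disjoint_left]
    intro ω hω1 hω2
    simp only [Set.mem_preimage, Set.mem_singleton_iff] at hω1 hω2
    exact hyz (hω1 ▸ hω2 ▸ rfl)

end Helpers

/-- sample complexity of capacity estimation. If
`n ≥ max{L·(N_α/ε²)·log²(V_α·N_α/ε²), 2·N_α/ε}` with `L = 375/4` and
`V_α = (25/4)·θ_α`, then the capacity estimate has error at most `ε`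
with probability at least `1 − α`. -/
theorem stmt_10 {𝒳 𝒴 : Type*} [Fintype 𝒳] [Nonempty 𝒳] [Fintype 𝒴] [Nonempty 𝒴]
    [DecidableEq 𝒴] [MeasurableSpace 𝒴] [MeasurableSingletonClass 𝒴]
    {Ω : Type*} [MeasurableSpace Ω] (μ : Measure Ω) [IsProbabilityMeasure μ]
    (h𝒳 : 2 ≤ Fintype.card 𝒳)
    (W : 𝒳 → 𝒴 → ℝ) (hW : ∀ x, IsDist (W x))
    (α : ℝ) (hα0 : 0 < α) (hα1 : α ≤ 1 / 2)
    (ε : ℝ) (hε0 : 0 < ε) (hε2 : ε ≤ 2)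
    (m n : ℕ) (hm : 0 < m) (hnm : n = Fintype.card 𝒳 * m)
    (hn1 : Fintype.card 𝒳 ≤ n) (hn2 : 2 * Fintype.card 𝒴 ≤ n)
    (hn : (n : ℝ) ≥ max
      (375 / 4 * (Nal (Fintype.card 𝒳) (Fintype.card 𝒴) α / ε ^ 2) *
        (Real.log (25 / 4 * thetaAl (Fintype.card 𝒳) (Fintype.card 𝒴) α *
          Nal (Fintype.card 𝒳) (Fintype.card 𝒴) α / ε ^ 2)) ^ 2)
      (2 * Nal (Fintype.card 𝒳) (Fintype.card 𝒴) α / ε))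
    (Y : 𝒳 → Fin m → Ω → 𝒴) (hmeas : ∀ x i, Measurable (Y x i))
    (hindep : iIndepFun (m := fun _ : 𝒳 × Fin m => ‹MeasurableSpace 𝒴›)
      (fun p ω => Y p.1 p.2 ω) μ)
    (hlaw : ∀ x i y, μ (Y x i ⁻¹' {y}) = ENNReal.ofReal (W x y)) :
    ENNReal.ofReal (1 - α) ≤
      μ {ω | |capR (empCh fun x i => Y x i ω) - capR W| ≤ ε} := by
  classical
  have hY1 : 1 ≤ Fintype.card 𝒴 := Fintype.card_pos
  have hKr : (1:ℝ) ≤ (Fintype.card 𝒴 : ℝ) := by exact_mod_cast hY1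
  have hXr : (2:ℝ) ≤ (Fintype.card 𝒳 : ℝ) := by exact_mod_cast h𝒳
  have hA3 := num_A3 h𝒳 hY1 hα0 hα1 hε0 hε2
  have herr := num_err h𝒳 hY1 hα0 hα1 hε0 hε2
  set A := Real.log (25 / 4 * thetaAl (Fintype.card 𝒳) (Fintype.card 𝒴) α *
      Nal (Fintype.card 𝒳) (Fintype.card 𝒴) α / ε ^ 2) with hAdef
  have hApos : (0:ℝ) < A := by linarith
  set u := ε/(8*A) with hudef
  have hu0 : 0 < u := by rw [hudef]; positivity
  have hu1 : u ≤ 1 := by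
    rw [hudef, div_le_one (by positivity)]
    nlinarith
  have hτu : ε/(4*A) = 2*u := by rw [hudef]; field_simp; ring
  -- bound on m
  have hmR : 375 * (Fintype.card 𝒴 : ℝ) * Real.log ((Fintype.card 𝒳 : ℝ)/α) * A^2 / ε^2
      ≤ (m:ℝ) := by
    have h1 := le_trans (le_max_left _ _) hn
    rw [Nal] at h1
    have hnm' : (n:ℝ) = (Fintype.card 𝒳 : ℝ) * (m:ℝ) := by
      rw [hnm]; push_cast; ring
    rw [hnm'] at h1
    have hXpos : (0:ℝ) < (Fintype.card 𝒳 : ℝ) := by linarith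
    have h2 : (Fintype.card 𝒳 : ℝ) *
        (375 * (Fintype.card 𝒴 : ℝ) * Real.log ((Fintype.card 𝒳 : ℝ)/α) * A^2 / ε^2)
        ≤ (Fintype.card 𝒳 : ℝ) * (m:ℝ) := by
      refine le_trans (le_of_eq ?_) h1
      field_simp
    exact le_of_mul_le_mul_left h2 hXpos
  -- the good event
  set G : Set Ω := {ω | ∀ x, ∀ Ac : Finset 𝒴,
      ∑ y ∈ Ac, empCh (fun x i => Y x i ω) x y ≤ (∑ y ∈ Ac, W x y) + u} with hGdef
  -- Claim 1 : on G the capacity estimate is ε-accurate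
  have hτ0 : 0 < ε/(4*A) := by positivity
  have hτe : ε/(4*A) ≤ Real.exp (-1) := by
    rw [Real.exp_neg]
    have hinv : (1:ℝ)/6 ≤ (Real.exp 1)⁻¹ := by
      have h6 : Real.exp 1 ≤ 6 := by linarith [Real.exp_one_lt_d9]
      nlinarith [inv_pos.2 (Real.exp_pos 1), inv_mul_cancel₀ (ne_of_gt (Real.exp_pos 1))]
    calc ε/(4*A) ≤ 2/12 := by
          apply div_le_div₀ (by norm_num) hε2 (by norm_num) (by linarith)
      _ ≤ (Real.exp 1)⁻¹ := by norm_num at hinv ⊢; linarith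
  have hγ0 : 0 < ε/8 := by positivity
  have hγh : ε/8 ≤ 1/2 := by linarith
  have hclaim1 : G ⊆ {ω | |capR (empCh fun x i => Y x i ω) - capR W| ≤ ε} := by
    intro ω hω
    simp only [hGdef, Set.mem_setOf_eq] at hω
    have hPdist : ∀ x, IsDist (empCh (fun x i => Y x i ω) x) :=
      fun x => empCh_isDist hm _ x
    have hl1 : ∀ x, ∑ y, |empCh (fun x i => Y x i ω) x y - W x y| ≤ ε/(4*A) := by
      intro x
      rw [hτu]
      exact l1_of_subsets _ _ ((hPdist x).2) ((hW x).2) (fun Ac => hω x Ac)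
    have hcp := cap_perturb hPdist hW hτ0 hτe hγ0 hγh hl1
    rw [Set.mem_setOf_eq]
    refine le_trans hcp ?_
    have hmul : (ε/(4*A))*(1 + 2*Real.log (Fintype.card 𝒴) - Real.log (ε/8)
        - Real.log (ε/(4*A))) ≤ (ε/(4*A))*(3*A) :=
      mul_le_mul_of_nonneg_left herr (le_of_lt hτ0)
    have heq : (ε/(4*A))*(3*A) = 3*ε/4 := by field_simp
    linarith
  -- Claim 2 : concentration
  have hconc : ∀ q : 𝒳 × Finset 𝒴,
      μ {ω | (∑ y ∈ q.2, W q.1 y) + u < ∑ y ∈ q.2, empCh (fun x i => Y x i ω) q.1 y}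
        ≤ ENNReal.ofReal (Real.exp (-(m:ℝ)*u^2/3)) := by
    rintro ⟨x, Ac⟩
    set Z : 𝒳 × Fin m → Ω → ℝ := fun q ω => if Y q.1 q.2 ω ∈ Ac then 1 else 0 with hZdef
    have hZmeas : ∀ q, Measurable (Z q) := by
      intro q
      exact Measurable.comp (f := fun ω => Y q.1 q.2 ω)
        (g := fun y : 𝒴 => if y ∈ Ac then (1:ℝ) else 0)
        Measurable.of_discrete (hmeas q.1 q.2)
    have hZ01 : ∀ q ω, Z q ω = 0 ∨ Z q ω = 1 := by
      intro q ω
      by_cases h : Y q.1 q.2 ω ∈ Ac <;> simp [hZdef, h]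
    have hZind : iIndepFun Z μ :=
      hindep.comp (fun _ => (fun y : 𝒴 => if y ∈ Ac then (1:ℝ) else 0))
        (fun _ => Measurable.of_discrete)
    set p := ∑ y ∈ Ac, W x y with hpdef
    have hp0 : 0 ≤ p := Finset.sum_nonneg fun y _ => (hW x).1 y
    have hp1 : p ≤ 1 := by
      rw [hpdef, ← (hW x).2]
      exact Finset.sum_le_sum_of_subset_of_nonneg (Finset.subset_univ _)
        (fun y _ _ => (hW x).1 y)
    have hZlaw : ∀ q ∈ ({x} ×ˢ (Finset.univ : Finset (Fin m))),
        μ {ω | Z q ω = 1} = ENNReal.ofReal p := by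
      intro q hq
      have hq1' : q.1 = x := Finset.mem_singleton.1 (Finset.mem_product.1 hq).1
      have hset : {ω | Z q ω = 1} = {ω | Y q.1 q.2 ω ∈ Ac} := by
        ext ω
        by_cases h : Y q.1 q.2 ω ∈ Ac <;> simp [hZdef, h]
      rw [hset, hq1']
      exact meas_mem_finset μ (Y x q.2) (hmeas x q.2) (W x) ((hW x).1)
        (fun y => hlaw x q.2 y) Ac
    have hcher := chernoff_sum Z hZind hZmeas hZ01 ({x} ×ˢ Finset.univ)
      hp0 hp1 hu0.le hu1 hZlaw
    have hcard : ({x} ×ˢ (Finset.univ : Finset (Fin m))).card = m := by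
      rw [Finset.card_product, Finset.card_singleton, one_mul, Finset.card_univ,
        Fintype.card_fin]
    rw [hcard] at hcher
    refine le_trans (measure_mono ?_) hcher
    intro ω hω
    simp only [Set.mem_setOf_eq] at hω ⊢
    have hsum : ∑ y ∈ Ac, empCh (fun x i => Y x i ω) x y
        = (∑ q ∈ {x} ×ˢ (Finset.univ : Finset (Fin m)), Z q ω)/m := by
      rw [Finset.sum_product, Finset.sum_singleton]
      unfold empCh
      rw [← Finset.sum_div]
      congr 1
      have hcf : ∀ y, ((Finset.univ.filter fun i => Y x i ω = y).card : ℝ)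
          = ∑ i : Fin m, if Y x i ω = y then (1:ℝ) else 0 := by
        intro y
        rw [Finset.card_filter]
        push_cast
        rfl
      rw [Finset.sum_congr rfl (fun y _ => hcf y), Finset.sum_comm]
      refine Finset.sum_congr rfl fun i _ => ?_
      rw [Finset.sum_ite_eq Ac (Y x i ω) (fun _ => (1:ℝ))]
    have hm0 : (0:ℝ) < (m:ℝ) := by exact_mod_cast hm
    rw [hsum, lt_div_iff₀ hm0] at hω
    linarith
  -- union bound
  have hGc : μ Gᶜ ≤ ENNReal.ofReal α := by
    have hsub : Gᶜ ⊆ ⋃ q : 𝒳 × Finset 𝒴,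
        {ω | (∑ y ∈ q.2, W q.1 y) + u < ∑ y ∈ q.2, empCh (fun x i => Y x i ω) q.1 y} := by
      intro ω hω
      simp only [hGdef, Set.mem_compl_iff, Set.mem_setOf_eq] at hω
      push_neg at hω
      obtain ⟨x, Ac, hlt⟩ := hω
      exact Set.mem_iUnion.2 ⟨(x, Ac), hlt⟩
    calc μ Gᶜ ≤ μ (⋃ q : 𝒳 × Finset 𝒴,
          {ω | (∑ y ∈ q.2, W q.1 y) + u < ∑ y ∈ q.2, empCh (fun x i => Y x i ω) q.1 y}) :=
        measure_mono hsub
      _ ≤ ∑' q : 𝒳 × Finset 𝒴, μ {ω | (∑ y ∈ q.2, W q.1 y) + u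
            < ∑ y ∈ q.2, empCh (fun x i => Y x i ω) q.1 y} := measure_iUnion_le _
      _ ≤ ∑' _q : 𝒳 × Finset 𝒴, ENNReal.ofReal (Real.exp (-(m:ℝ)*u^2/3)) :=
        ENNReal.tsum_le_tsum hconc
      _ = (Fintype.card 𝒳 * 2^(Fintype.card 𝒴) : ℕ)
            * ENNReal.ofReal (Real.exp (-(m:ℝ)*u^2/3)) := by
          rw [tsum_fintype, Finset.sum_const, Finset.card_univ, Fintype.card_prod,
            Fintype.card_finset, nsmul_eq_mul]
      _ ≤ ENNReal.ofReal α := by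
          rw [← ENNReal.ofReal_natCast, ← ENNReal.ofReal_mul (by positivity)]
          apply ENNReal.ofReal_le_ofReal
          have hmR' : 375 * (Fintype.card 𝒴 : ℝ) * Real.log ((Fintype.card 𝒳:ℝ)/α) *
              (Real.log (25 / 4 * thetaAl (Fintype.card 𝒳) (Fintype.card 𝒴) α *
                Nal (Fintype.card 𝒳) (Fintype.card 𝒴) α / ε ^ 2))^2 / ε^2 ≤ ((m:ℕ):ℝ) := by
            rw [← hAdef]; exact hmR
          have hnc := num_conc h𝒳 hY1 hα0 hα1 hε0 hε2 hmR'
          rw [← hAdef, ← hudef] at hnc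
          push_cast
          have hring : -(m:ℝ)*u^2/3 = -((m:ℝ)*u^2/3) := by ring
          rw [hring]
          exact hnc
  -- combine
  have huniv : (1:ENNReal) ≤ μ G + μ Gᶜ := by
    rw [show (1:ENNReal) = μ Set.univ from (measure_univ).symm,
      ← Set.union_compl_self G]
    exact measure_union_le _ _
  have h1 : ENNReal.ofReal (1-α) ≤ μ G := by
    have h2 : (1:ENNReal) ≤ μ G + ENNReal.ofReal α :=
      le_trans huniv (add_le_add le_rfl hGc)
    rw [ENNReal.ofReal_sub _ hα0.le, ENNReal.ofReal_one]
    exact tsub_le_iff_right.2 h2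
  exact le_trans h1 (measure_mono hclaim1)
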